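/- Let φ : Z → ℝⁿ and χ : Z → ℝᵖ be C^∞ maps on an open set Z ⊆ ℝᵐ, with Dφ(z) injective for every z ∈ Z. Let a₀ ∈ ℝⁿ and z₀ ∈ Z satisfy Dφ(z₀)ᵀ(a₀ − φ(z₀)) = 0, and assume the Hessian H of d_{a₀}(z) := ½‖a₀ − φ(z)‖² at z₀ is invertible. Then there exist open neighborhoods A ⊆ ℝⁿ of a₀ and Z′ ⊆ Z of z₀ and a C^∞ map ζ : A → Z′ with ζ(a₀) = z₀ such that: (i) for every a ∈ A, ζ(a) is the unique z ∈ Z′ with Dφ(z)ᵀ(a − φ(z)) = 0; (ii) the solution map y := χ ∘ ζ satisfies Dy(a₀) = Dχ(z₀) H⁻¹ Dφ(z₀)ᵀ; and (iii) lim_{ε→0⁺} sup{ ‖y(a) − y(a₀)‖/‖a − a₀‖ : a ∈ A, 0 < ‖a − a₀‖ ≤ ε } = ‖Dχ(z₀) H⁻¹ Dφ(z₀)ᵀ‖. -/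

import Mathlib

set_option maxHeartbeats 1000000

open Filter Topology
open scoped RealInnerProductSpace ContDiff

noncomputable section

lemma rice_aux {E F : Type*} [NormedAddCommGroup E] [NormedSpace ℝ E]
    [NormedAddCommGroup F] [NormedSpace ℝ F]
    (g : E → F) (L : E →L[ℝ] F) (a₀ : E) (hg : HasFDerivAt g L a₀)
    (A : Set E) (hA : IsOpen A) (ha : a₀ ∈ A) :
    Tendsto (fun ε : ℝ => sSup {q : ℝ | ∃ a ∈ A, 0 < ‖a - a₀‖ ∧ ‖a - a₀‖ ≤ ε ∧
        q = ‖g a - g a₀‖ / ‖a - a₀‖}) (𝓝[>] (0 : ℝ)) (𝓝 ‖L‖) := by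
  rcases subsingleton_or_nontrivial E with hE | hE
  · have hL : L = 0 := Subsingleton.elim _ _
    have hset : ∀ ε : ℝ, {q : ℝ | ∃ a ∈ A, 0 < ‖a - a₀‖ ∧ ‖a - a₀‖ ≤ ε ∧
        q = ‖g a - g a₀‖ / ‖a - a₀‖} = ∅ := by
      intro ε
      ext q
      simp only [Set.mem_setOf_eq, Set.mem_empty_iff_false, iff_false]
      rintro ⟨a, -, hpos, -, -⟩
      have : a = a₀ := Subsingleton.elim _ _
      simp [this] at hpos
    simp only [hset, Real.sSup_empty, hL, norm_zero]
    exact tendsto_const_nhds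
  · rw [Metric.tendsto_nhdsWithin_nhds]
    intro δ hδ
    -- from differentiability: quantified estimate
    have h1 : ∀ᶠ a in 𝓝 a₀, ‖g a - g a₀ - L (a - a₀)‖ ≤ δ / 2 * ‖a - a₀‖ := by
      have := hg.isLittleO.def (by positivity : (0:ℝ) < δ / 2)
      simpa using this
    obtain ⟨r, hr, hball⟩ := Metric.mem_nhds_iff.1 (Filter.inter_mem h1 (hA.mem_nhds ha))
    refine ⟨r, hr, ?_⟩
    intro ε hε hεd
    simp only [Set.mem_Ioi] at hε
    rw [Real.dist_eq, sub_zero, abs_of_pos hε] at hεd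
    set ε' := min ε (r / 2) with hε'
    have hε'pos : 0 < ε' := lt_min hε (by positivity)
    have hε'r : ε' < r := lt_of_le_of_lt (min_le_right _ _) (by linarith)
    set S := {q : ℝ | ∃ a ∈ A, 0 < ‖a - a₀‖ ∧ ‖a - a₀‖ ≤ ε ∧
        q = ‖g a - g a₀‖ / ‖a - a₀‖}
    -- every element of S is ≤ ‖L‖ + δ/2
    have hub : ∀ q ∈ S, q ≤ ‖L‖ + δ / 2 := by
      rintro q ⟨a, haA, hpos, hle, rfl⟩
      have hlt : ‖a - a₀‖ < r := lt_of_le_of_lt hle hεd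
      have hest := (hball (by simpa [Metric.mem_ball, dist_eq_norm] using hlt)).1
      simp only [Set.mem_setOf_eq] at hest
      have : ‖g a - g a₀‖ ≤ (‖L‖ + δ / 2) * ‖a - a₀‖ := by
        calc ‖g a - g a₀‖ ≤ ‖L (a - a₀)‖ + ‖g a - g a₀ - L (a - a₀)‖ := by
              have := norm_add_le (L (a - a₀)) (g a - g a₀ - L (a - a₀))
              simpa [add_sub_cancel] using this
          _ ≤ ‖L‖ * ‖a - a₀‖ + δ / 2 * ‖a - a₀‖ := add_le_add (L.le_opNorm _) hest
          _ = (‖L‖ + δ / 2) * ‖a - a₀‖ := by ring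
      rw [div_le_iff₀ hpos]
      exact this
    have hbdd : BddAbove S := ⟨‖L‖ + δ / 2, hub⟩
    -- construct a witness a with ‖a - a₀‖ = ε' and good lower bound
    have hwitness : ∀ x : E, x ≠ 0 → ∃ a, a ∈ A ∧ ‖a - a₀‖ = ε' ∧
        ‖L x‖ / ‖x‖ - δ / 2 ≤ ‖g a - g a₀‖ / ‖a - a₀‖ := by
      intro x hx
      have hxn : (0:ℝ) < ‖x‖ := norm_pos_iff.2 hx
      set a := a₀ + (ε' / ‖x‖) • x with hadef
      have hnorm : ‖a - a₀‖ = ε' := by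
        have : a - a₀ = (ε' / ‖x‖) • x := by simp [hadef]
        rw [this, norm_smul, Real.norm_eq_abs, abs_of_pos (div_pos hε'pos hxn),
          div_mul_cancel₀ _ hxn.ne']
      have hlt : ‖a - a₀‖ < r := by rw [hnorm]; exact hε'r
      have hmem := hball (by simpa [Metric.mem_ball, dist_eq_norm] using hlt)
      have hest := hmem.1
      simp only [Set.mem_setOf_eq] at hest
      refine ⟨a, hmem.2, hnorm, ?_⟩
      have hLa : ‖L (a - a₀)‖ = ε' / ‖x‖ * ‖L x‖ := by
        have : a - a₀ = (ε' / ‖x‖) • x := by simp [hadef]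
        rw [this, map_smul, norm_smul, Real.norm_eq_abs,
          abs_of_pos (div_pos hε'pos hxn)]
      have hge : ‖L (a - a₀)‖ - δ / 2 * ‖a - a₀‖ ≤ ‖g a - g a₀‖ := by
        have h2 : ‖L (a - a₀) - (g a - g a₀)‖ = ‖g a - g a₀ - L (a - a₀)‖ :=
          norm_sub_rev _ _
        have h3 : ‖g a - g a₀‖ = ‖L (a - a₀) - (L (a - a₀) - (g a - g a₀))‖ := by
          congr 1; abel
        have h4 := norm_sub_norm_le (L (a - a₀)) (L (a - a₀) - (g a - g a₀))
        rw [h2, ← h3] at h4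
        linarith
      rw [le_div_iff₀ (hnorm ▸ hε'pos)]
      calc (‖L x‖ / ‖x‖ - δ / 2) * ‖a - a₀‖
          = ε' / ‖x‖ * ‖L x‖ - δ / 2 * ‖a - a₀‖ := by
            rw [hnorm]; field_simp
        _ = ‖L (a - a₀)‖ - δ / 2 * ‖a - a₀‖ := by rw [hLa]
        _ ≤ ‖g a - g a₀‖ := hge
    -- S is nonempty
    obtain ⟨x₀, hx₀⟩ := exists_ne (0 : E)
    obtain ⟨a₁, ha₁A, ha₁n, -⟩ := hwitness x₀ hx₀
    have hS1 : (‖g a₁ - g a₀‖ / ‖a₁ - a₀‖) ∈ S :=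
      ⟨a₁, ha₁A, by rw [ha₁n]; exact hε'pos, by rw [ha₁n]; exact min_le_left _ _, rfl⟩
    -- lower bound for sSup S
    have hlow : ‖L‖ - δ < sSup S := by
      by_cases hcase : ‖L‖ < δ
      · have h0 : (0:ℝ) ≤ ‖g a₁ - g a₀‖ / ‖a₁ - a₀‖ := by positivity
        have := le_csSup hbdd hS1
        linarith
      · push_neg at hcase
        have hc : ‖L‖ - δ / 2 < ‖L‖ := by linarith
        obtain ⟨x, hx1, hxlt⟩ := L.exists_lt_apply_of_lt_opNorm hc
        have hx0 : x ≠ 0 := by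
          rintro rfl
          simp only [map_zero, norm_zero] at hxlt
          linarith
        have hxn : (0:ℝ) < ‖x‖ := norm_pos_iff.2 hx0
        obtain ⟨a, haA, han, hage⟩ := hwitness x hx0
        have hmem : (‖g a - g a₀‖ / ‖a - a₀‖) ∈ S :=
          ⟨a, haA, by rw [han]; exact hε'pos, by rw [han]; exact min_le_left _ _, rfl⟩
        have h3 : ‖L‖ - δ / 2 < ‖L x‖ / ‖x‖ := by
          have h4 : ‖L x‖ ≤ ‖L x‖ / ‖x‖ := by
            rw [le_div_iff₀ hxn]
            nlinarith [norm_nonneg (L x)]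
          linarith
        have := le_csSup hbdd hmem
        linarith
    have hup : sSup S ≤ ‖L‖ + δ / 2 := Real.sSup_le hub (by positivity)
    rw [Real.dist_eq, abs_lt]
    constructor <;> linarith

/-- The adjoint, as a continuous linear map on spaces of continuous linear maps
between real inner product spaces. -/
def adjointCLM {E F : Type*} [NormedAddCommGroup E] [InnerProductSpace ℝ E]
    [NormedAddCommGroup F] [InnerProductSpace ℝ F] [CompleteSpace E] [CompleteSpace F] :
    (E →L[ℝ] F) →L[ℝ] (F →L[ℝ] E) :=
  LinearMap.mkContinuous
    { toFun := fun A => ContinuousLinearMap.adjoint A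
      map_add' := fun A B => by simp [map_add]
      map_smul' := fun r A => by
        have := ContinuousLinearMap.adjoint.map_smulₛₗ r A
        simpa [starRingEnd_apply] using this }
    1 (fun A => by simp [ContinuousLinearMap.adjoint.norm_map])

lemma adjointCLM_apply {E F : Type*} [NormedAddCommGroup E] [InnerProductSpace ℝ E]
    [NormedAddCommGroup F] [InnerProductSpace ℝ F] [CompleteSpace E] [CompleteSpace F]
    (A : E →L[ℝ] F) : adjointCLM A = ContinuousLinearMap.adjoint A := rfl

/-- Chart formulation of Theorem 6.2 (condition number of the generalized critical point
problem GCPP): local solution map of the critical point equation, its derivative and its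
Rice condition number. -/
theorem stmt_4 {m n p : ℕ}
    (Z : Set (EuclideanSpace ℝ (Fin m))) (hZ : IsOpen Z)
    (φ : EuclideanSpace ℝ (Fin m) → EuclideanSpace ℝ (Fin n))
    (χ : EuclideanSpace ℝ (Fin m) → EuclideanSpace ℝ (Fin p))
    (hφ : ContDiffOn ℝ (⊤ : ℕ∞) φ Z) (hχ : ContDiffOn ℝ (⊤ : ℕ∞) χ Z)
    (hinj : ∀ z ∈ Z, Function.Injective (fderiv ℝ φ z))
    (a₀ : EuclideanSpace ℝ (Fin n))
    (z₀ : EuclideanSpace ℝ (Fin m)) (hz₀ : z₀ ∈ Z)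
    (hcrit : ContinuousLinearMap.adjoint (fderiv ℝ φ z₀) (a₀ - φ z₀) = 0)
    (H Hinv : EuclideanSpace ℝ (Fin m) →L[ℝ] EuclideanSpace ℝ (Fin m))
    (hH : ∀ v w, ⟪H v, w⟫ =
      fderiv ℝ (fderiv ℝ (fun z => (1 / 2 : ℝ) * ‖a₀ - φ z‖ ^ 2)) z₀ v w)
    (hHinv₁ : H.comp Hinv = ContinuousLinearMap.id ℝ (EuclideanSpace ℝ (Fin m)))
    (hHinv₂ : Hinv.comp H = ContinuousLinearMap.id ℝ (EuclideanSpace ℝ (Fin m))) :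
    ∃ (A : Set (EuclideanSpace ℝ (Fin n))) (Z' : Set (EuclideanSpace ℝ (Fin m)))
      (ζ : EuclideanSpace ℝ (Fin n) → EuclideanSpace ℝ (Fin m)),
      IsOpen A ∧ a₀ ∈ A ∧ IsOpen Z' ∧ Z' ⊆ Z ∧ z₀ ∈ Z' ∧
      ContDiffOn ℝ (⊤ : ℕ∞) ζ A ∧ ζ a₀ = z₀ ∧
      (∀ a ∈ A, ζ a ∈ Z' ∧ ∀ z ∈ Z',
        (ContinuousLinearMap.adjoint (fderiv ℝ φ z) (a - φ z) = 0 ↔ z = ζ a)) ∧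
      fderiv ℝ (fun a => χ (ζ a)) a₀ =
        ((fderiv ℝ χ z₀).comp Hinv).comp (ContinuousLinearMap.adjoint (fderiv ℝ φ z₀)) ∧
      Tendsto (fun ε : ℝ => sSup {q : ℝ | ∃ a ∈ A, 0 < ‖a - a₀‖ ∧ ‖a - a₀‖ ≤ ε ∧
          q = ‖χ (ζ a) - χ (ζ a₀)‖ / ‖a - a₀‖}) (𝓝[>] (0 : ℝ))
        (𝓝 ‖((fderiv ℝ χ z₀).comp Hinv).comp (ContinuousLinearMap.adjoint (fderiv ℝ φ z₀))‖) := by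
  classical
  have hone : ((⊤ : ℕ∞) : WithTop ℕ∞) ≠ 0 := by
    simp
  -- basic smoothness facts
  have hZnhds : Z ∈ 𝓝 z₀ := hZ.mem_nhds hz₀
  have hDφ : ContDiffOn ℝ (⊤ : ℕ∞) (fderiv ℝ φ) Z :=
    ((contDiffOn_infty_iff_fderiv_of_isOpen hZ).1 hφ).2
  have hadjφ : ContDiffOn ℝ (⊤ : ℕ∞) (fun z => ContinuousLinearMap.adjoint (fderiv ℝ φ z)) Z := by
    have h := (adjointCLM (E := EuclideanSpace ℝ (Fin m))
      (F := EuclideanSpace ℝ (Fin n))).contDiff.comp_contDiffOn hDφ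
    simpa [Function.comp_def, adjointCLM_apply] using h
  -- the critical point map
  set f : EuclideanSpace ℝ (Fin n) × EuclideanSpace ℝ (Fin m) → EuclideanSpace ℝ (Fin m) :=
    fun q => ContinuousLinearMap.adjoint (fderiv ℝ φ q.2) (q.1 - φ q.2) with hfdef
  have hs : IsOpen ((Set.univ : Set (EuclideanSpace ℝ (Fin n))) ×ˢ Z) := isOpen_univ.prod hZ
  have hf : ContDiffOn ℝ (⊤ : ℕ∞) f ((Set.univ : Set (EuclideanSpace ℝ (Fin n))) ×ˢ Z) := by
    apply ContDiffOn.clm_apply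
    · exact hadjφ.comp (contDiff_snd.contDiffOn)
        (fun q hq => (Set.mem_prod.1 hq).2)
    · exact (contDiff_fst.contDiffOn).sub
        (hφ.comp (contDiff_snd.contDiffOn) (fun q hq => (Set.mem_prod.1 hq).2))
  -- G : the map z ↦ Dφ(z)ᵀ (a₀ - φ z)
  set G : EuclideanSpace ℝ (Fin m) → EuclideanSpace ℝ (Fin m) := fun z => ContinuousLinearMap.adjoint (fderiv ℝ φ z) (a₀ - φ z) with hGdef
  have hG : ContDiffOn ℝ (⊤ : ℕ∞) G Z :=
    hadjφ.clm_apply (contDiffOn_const.sub hφ)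
  have hGdiff : DifferentiableAt ℝ G z₀ :=
    (hG.contDiffAt hZnhds).differentiableAt hone
  set G' : EuclideanSpace ℝ (Fin m) →L[ℝ] EuclideanSpace ℝ (Fin m) := fderiv ℝ G z₀ with hG'def
  -- first derivative of the distance function on Z
  have hd1 : ∀ z ∈ Z, HasFDerivAt (fun z => (1 / 2 : ℝ) * ‖a₀ - φ z‖ ^ 2)
      (-(innerSL ℝ (G z))) z := by
    intro z hz
    have hφz : DifferentiableAt ℝ φ z :=
      (hφ.contDiffAt (hZ.mem_nhds hz)).differentiableAt hone
    have hu : HasFDerivAt (fun z => a₀ - φ z) (-(fderiv ℝ φ z)) z :=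
      hφz.hasFDerivAt.const_sub a₀
    have hinner := (hu.inner ℝ hu).const_mul (1 / 2 : ℝ)
    have heq : (fun z => (1 / 2 : ℝ) * ‖a₀ - φ z‖ ^ 2) =
        fun z => (1 / 2 : ℝ) * ⟪a₀ - φ z, a₀ - φ z⟫ := by
      funext z; rw [real_inner_self_eq_norm_sq]
    rw [heq]
    refine hinner.congr_fderiv ?_
    ext w
    simp only [ContinuousLinearMap.coe_smul', Pi.smul_apply, ContinuousLinearMap.coe_comp',
      Function.comp_apply, ContinuousLinearMap.prod_apply, ContinuousLinearMap.neg_apply,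
      fderivInnerCLM_apply, smul_eq_mul, innerSL_apply_apply]
    rw [hGdef]
    simp only [ContinuousLinearMap.adjoint_inner_left]
    simp only [inner_neg_left, inner_neg_right,
      real_inner_comm ((fderiv ℝ φ z) w) (a₀ - φ z)]
    ring
  -- second derivative : G' = -H
  have hsecond : fderiv ℝ (fderiv ℝ (fun z => (1 / 2 : ℝ) * ‖a₀ - φ z‖ ^ 2)) z₀ =
      -((innerSL ℝ (E := EuclideanSpace ℝ (Fin m))).comp G') := by
    have heq : fderiv ℝ (fun z => (1 / 2 : ℝ) * ‖a₀ - φ z‖ ^ 2) =ᶠ[𝓝 z₀]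
        fun z => -(innerSL ℝ (G z)) := by
      filter_upwards [hZnhds] with z hz using (hd1 z hz).fderiv
    rw [heq.fderiv_eq]
    have h1 : HasFDerivAt (fun z => -(innerSL ℝ (G z)))
        (-((innerSL ℝ (E := EuclideanSpace ℝ (Fin m))).comp G')) z₀ :=
      (((innerSL ℝ (E := EuclideanSpace ℝ (Fin m))).hasFDerivAt.comp z₀ hGdiff.hasFDerivAt)).neg
    exact h1.fderiv
  have hG'H : G' = -H := by
    refine ContinuousLinearMap.ext fun v => ?_
    refine ext_inner_right ℝ (fun w => ?_)
    have h1 := hH v w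
    rw [hsecond] at h1
    simp only [ContinuousLinearMap.neg_apply, ContinuousLinearMap.coe_comp',
      Function.comp_apply, innerSL_apply_apply] at h1 ⊢
    rw [inner_neg_left]
    linarith [h1]
  -- inverses pointwise
  have hHinvH : ∀ x, Hinv (H x) = x := fun x => by
    have := ContinuousLinearMap.ext_iff.1 hHinv₂ x
    simpa using this
  have hHHinv : ∀ x, H (Hinv x) = x := fun x => by
    have := ContinuousLinearMap.ext_iff.1 hHinv₁ x
    simpa using this
  -- derivative of f at (a₀, z₀)
  set T : EuclideanSpace ℝ (Fin n) →L[ℝ] EuclideanSpace ℝ (Fin m) :=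
    ContinuousLinearMap.adjoint (fderiv ℝ φ z₀) with hTdef
  set f' : (EuclideanSpace ℝ (Fin n) × EuclideanSpace ℝ (Fin m)) →L[ℝ]
      EuclideanSpace ℝ (Fin m) :=
    T.comp (ContinuousLinearMap.fst ℝ _ _) - H.comp (ContinuousLinearMap.snd ℝ _ _)
    with hf'def
  have hadjdiff : DifferentiableAt ℝ
      (fun z => ContinuousLinearMap.adjoint (fderiv ℝ φ z)) z₀ :=
    (hadjφ.contDiffAt hZnhds).differentiableAt hone
  have hfd : HasFDerivAt f f' (a₀, z₀) := by
    have h1 : HasFDerivAt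
        (fun q : EuclideanSpace ℝ (Fin n) × EuclideanSpace ℝ (Fin m) => G q.2)
        (G'.comp (ContinuousLinearMap.snd ℝ _ _)) (a₀, z₀) :=
      hGdiff.hasFDerivAt.comp (g := G) (f := Prod.snd) _ hasFDerivAt_snd
    have hc : HasFDerivAt
        (fun q : EuclideanSpace ℝ (Fin n) × EuclideanSpace ℝ (Fin m) =>
          ContinuousLinearMap.adjoint (fderiv ℝ φ q.2))
        ((fderiv ℝ (fun z => ContinuousLinearMap.adjoint (fderiv ℝ φ z)) z₀).comp
          (ContinuousLinearMap.snd ℝ _ _)) (a₀, z₀) :=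
      hadjdiff.hasFDerivAt.comp (g := fun z => ContinuousLinearMap.adjoint (fderiv ℝ φ z)) (f := Prod.snd) _ hasFDerivAt_snd
    have hu2 : HasFDerivAt
        (fun q : EuclideanSpace ℝ (Fin n) × EuclideanSpace ℝ (Fin m) => q.1 - a₀)
        (ContinuousLinearMap.fst ℝ _ _) (a₀, z₀) := hasFDerivAt_fst.sub_const a₀
    have h2 := hc.clm_apply hu2
    have h3 := h1.add h2
    have heq : (fun q : EuclideanSpace ℝ (Fin n) × EuclideanSpace ℝ (Fin m) =>
        G q.2 + (ContinuousLinearMap.adjoint (fderiv ℝ φ q.2)) (q.1 - a₀)) = f := by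
      funext q
      rw [hGdef, hfdef]
      simp only
      rw [← map_add]
      congr 1
      abel
    change HasFDerivAt (fun q : EuclideanSpace ℝ (Fin n) × EuclideanSpace ℝ (Fin m) =>
        G q.2 + (ContinuousLinearMap.adjoint (fderiv ℝ φ q.2)) (q.1 - a₀)) _ _ at h3
    rw [heq] at h3
    refine h3.congr_fderiv ?_
    refine ContinuousLinearMap.ext fun q => ?_
    rw [hf'def, hG'H]
    simp [map_zero]
    rw [← hTdef]
    abel
  -- the extended map Φ and its derivative, an equivalence
  set Φ : EuclideanSpace ℝ (Fin n) × EuclideanSpace ℝ (Fin m) →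
      EuclideanSpace ℝ (Fin n) × EuclideanSpace ℝ (Fin m) :=
    fun q => (q.1, f q) with hΦdef
  have hΦcont : ContDiffOn ℝ (⊤ : ℕ∞) Φ (Set.univ ×ˢ Z) :=
    (contDiff_fst.contDiffOn).prodMk hf
  have hmems : (a₀, z₀) ∈ (Set.univ : Set (EuclideanSpace ℝ (Fin n))) ×ˢ Z := by
    simp [hz₀]
  have hΦat : ContDiffAt ℝ (⊤ : ℕ∞) Φ (a₀, z₀) :=
    hΦcont.contDiffAt (hs.mem_nhds hmems)
  set Φl : (EuclideanSpace ℝ (Fin n) × EuclideanSpace ℝ (Fin m)) →L[ℝ]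
      (EuclideanSpace ℝ (Fin n) × EuclideanSpace ℝ (Fin m)) :=
    (ContinuousLinearMap.fst ℝ _ _).prod f' with hΦldef
  set Φi : (EuclideanSpace ℝ (Fin n) × EuclideanSpace ℝ (Fin m)) →L[ℝ]
      (EuclideanSpace ℝ (Fin n) × EuclideanSpace ℝ (Fin m)) :=
    (ContinuousLinearMap.fst ℝ _ _).prod
      (Hinv.comp ((T.comp (ContinuousLinearMap.fst ℝ _ _)) -
        (ContinuousLinearMap.snd ℝ _ _))) with hΦidef
  have hleft : Function.LeftInverse Φi Φl := by
    intro q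
    rw [hΦldef, hΦidef, hf'def]
    ext <;> simp [hHinvH]
  have hright : Function.RightInverse Φi Φl := by
    intro q
    rw [hΦldef, hΦidef, hf'def]
    ext <;> simp [hHHinv]
  set Φ' := ContinuousLinearEquiv.equivOfInverse Φl Φi hleft hright with hΦ'def
  have hΦ'd : HasFDerivAt Φ (Φ' : (EuclideanSpace ℝ (Fin n) × EuclideanSpace ℝ (Fin m)) →L[ℝ]
      (EuclideanSpace ℝ (Fin n) × EuclideanSpace ℝ (Fin m))) (a₀, z₀) := by
    have h := hasFDerivAt_fst.prodMk hfd
    exact h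
  -- the partial homeomorphism given by the inverse function theorem
  set Ψ := hΦat.toOpenPartialHomeomorph Φ hΦ'd hone with hΨdef
  have hΨcoe : (Ψ : EuclideanSpace ℝ (Fin n) × EuclideanSpace ℝ (Fin m) →
      EuclideanSpace ℝ (Fin n) × EuclideanSpace ℝ (Fin m)) = Φ :=
    ContDiffAt.toOpenPartialHomeomorph_coe _ _ _
  have hsource : (a₀, z₀) ∈ Ψ.source :=
    ContDiffAt.mem_toOpenPartialHomeomorph_source _ _ _
  have hΦa₀ : Φ (a₀, z₀) = (a₀, 0) := by
    rw [hΦdef]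
    refine Prod.ext rfl ?_
    rw [hfdef]
    exact hcrit
  have htarget : (a₀, (0 : EuclideanSpace ℝ (Fin m))) ∈ Ψ.target := by
    have h := ContDiffAt.image_mem_toOpenPartialHomeomorph_target hΦat hΦ'd hone
    rwa [hΦa₀] at h
  have hsymm₀ : Ψ.symm (a₀, 0) = (a₀, z₀) := by
    have h := Ψ.left_inv hsource
    rw [hΨcoe, hΦa₀] at h
    exact h
  -- openness of the set of points with invertible derivative
  have hΦfderiv : ContinuousOn (fderiv ℝ Φ)
      ((Set.univ : Set (EuclideanSpace ℝ (Fin n))) ×ˢ Z) :=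
    (((contDiffOn_infty_iff_fderiv_of_isOpen hs).1 hΦcont).2).continuousOn
  set V : Set (EuclideanSpace ℝ (Fin n) × EuclideanSpace ℝ (Fin m)) :=
    ((Set.univ : Set (EuclideanSpace ℝ (Fin n))) ×ˢ Z) ∩
      (fderiv ℝ Φ) ⁻¹' {L | IsUnit L} with hVdef
  have hVopen : IsOpen V := by
    set_option synthInstance.maxHeartbeats 400000 in
    exact hΦfderiv.isOpen_inter_preimage hs Units.isOpen
  have hV₀ : (a₀, z₀) ∈ V := by
    refine ⟨hmems, ?_⟩
    rw [Set.mem_preimage, hΦ'd.fderiv]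
    exact ⟨(ContinuousLinearEquiv.unitsEquiv ℝ _).symm Φ', rfl⟩
  -- the local inverse is smooth at points of U₀
  have hsymmCD : ∀ b ∈ Ψ.target ∩ Ψ.symm ⁻¹' V, ContDiffAt ℝ (⊤ : ℕ∞) Ψ.symm b := by
    rintro b ⟨hbt, hbV⟩
    rw [Set.mem_preimage, hVdef] at hbV
    obtain ⟨hbs, hbu⟩ := hbV
    rw [Set.mem_preimage, Set.mem_setOf_eq] at hbu
    set e := (ContinuousLinearEquiv.unitsEquiv ℝ _) hbu.unit with hedef
    have hΦatb : ContDiffAt ℝ (⊤ : ℕ∞) Φ (Ψ.symm b) := hΦcont.contDiffAt (hs.mem_nhds hbs)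
    have hdiffb : HasFDerivAt Φ (e : (EuclideanSpace ℝ (Fin n) × EuclideanSpace ℝ (Fin m)) →L[ℝ]
        (EuclideanSpace ℝ (Fin n) × EuclideanSpace ℝ (Fin m))) (Ψ.symm b) := by
      have hd := (hΦatb.differentiableAt hone).hasFDerivAt
      have hcoe : (e : (EuclideanSpace ℝ (Fin n) × EuclideanSpace ℝ (Fin m)) →L[ℝ]
          (EuclideanSpace ℝ (Fin n) × EuclideanSpace ℝ (Fin m))) = fderiv ℝ Φ (Ψ.symm b) := by
        refine ContinuousLinearMap.ext fun x => ?_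
        have h1 : (e : (EuclideanSpace ℝ (Fin n) × EuclideanSpace ℝ (Fin m)) →L[ℝ]
            (EuclideanSpace ℝ (Fin n) × EuclideanSpace ℝ (Fin m))) x =
            (hbu.unit : (EuclideanSpace ℝ (Fin n) × EuclideanSpace ℝ (Fin m)) →L[ℝ]
            (EuclideanSpace ℝ (Fin n) × EuclideanSpace ℝ (Fin m))) x := rfl
        rw [h1, hbu.unit_spec]
      rwa [hcoe]
    have h := Ψ.contDiffAt_symm hbt (by rw [hΨcoe]; exact hdiffb) (by rw [hΨcoe]; exact hΦatb)
    exact h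
  -- product neighborhood inside the source
  obtain ⟨A₁, Z', hA₁open, hZ'open, hA₁mem, hZ'mem, hprod⟩ :=
    isOpen_prod_iff.1 (Ψ.open_source.inter hs) a₀ z₀ ⟨hsource, hmems⟩
  set U : Set (EuclideanSpace ℝ (Fin n) × EuclideanSpace ℝ (Fin m)) :=
    Ψ.target ∩ Ψ.symm ⁻¹' (V ∩ (A₁ ×ˢ Z')) with hUdef
  have hUopen : IsOpen U :=
    Ψ.continuousOn_symm.isOpen_inter_preimage Ψ.open_target
      (hVopen.inter (hA₁open.prod hZ'open))
  have hU₀ : (a₀, (0 : EuclideanSpace ℝ (Fin m))) ∈ U := by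
    refine ⟨htarget, ?_⟩
    rw [Set.mem_preimage, hsymm₀]
    exact ⟨hV₀, hA₁mem, hZ'mem⟩
  set ζ : EuclideanSpace ℝ (Fin n) → EuclideanSpace ℝ (Fin m) :=
    fun a => (Ψ.symm (a, 0)).2 with hζdef
  set A : Set (EuclideanSpace ℝ (Fin n)) :=
    A₁ ∩ {a | (a, (0 : EuclideanSpace ℝ (Fin m))) ∈ U} with hAdef
  have hAopen : IsOpen A :=
    hA₁open.inter (hUopen.preimage (continuous_id.prodMk continuous_const))
  have hA₀ : a₀ ∈ A := ⟨hA₁mem, hU₀⟩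
  have hζa₀ : ζ a₀ = z₀ := by
    show (Ψ.symm (a₀, 0)).2 = z₀
    rw [hsymm₀]
  have hZ'Z : Z' ⊆ Z := by
    intro z hz
    have h := (hprod (show (a₀, z) ∈ A₁ ×ˢ Z' from ⟨hA₁mem, hz⟩)).2
    exact h.2
  -- key identities for a ∈ A
  have hkey : ∀ a ∈ A, Ψ.symm (a, 0) = (a, ζ a) ∧ ζ a ∈ Z' ∧ f (a, ζ a) = 0 ∧
      (a, ζ a) ∈ Ψ.source := by
    intro a ha
    obtain ⟨haA₁, hU⟩ := ha
    obtain ⟨ht, hpre⟩ := hU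
    rw [Set.mem_preimage] at hpre
    obtain ⟨hVmem, hprodmem⟩ := hpre
    have hsrc : Ψ.symm (a, 0) ∈ Ψ.source := Ψ.map_target ht
    have hri : Ψ (Ψ.symm (a, 0)) = (a, 0) := Ψ.right_inv ht
    rw [hΨcoe] at hri
    have h1 : (Ψ.symm (a, 0)).1 = a := congrArg Prod.fst hri
    have hpair : Ψ.symm (a, 0) = (a, ζ a) := Prod.ext h1 rfl
    have h2 : f (Ψ.symm (a, 0)) = 0 := congrArg Prod.snd hri
    rw [hpair] at h2
    refine ⟨hpair, ?_, h2, ?_⟩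
    · have h3 := hprodmem
      rw [hpair] at h3
      exact h3.2
    · rw [hpair] at hsrc
      exact hsrc
  -- smoothness of ζ on A
  have hζCD : ContDiffOn ℝ (⊤ : ℕ∞) ζ A := by
    intro a ha
    have hUa : (a, (0 : EuclideanSpace ℝ (Fin m))) ∈ U := ha.2
    have hVa : (a, (0 : EuclideanSpace ℝ (Fin m))) ∈ Ψ.target ∩ Ψ.symm ⁻¹' V := by
      refine ⟨hUa.1, ?_⟩
      rw [Set.mem_preimage]
      exact (Set.mem_preimage.1 hUa.2).1
    have h1 : ContDiffAt ℝ (⊤ : ℕ∞) Ψ.symm (a, 0) := hsymmCD _ hVa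
    have h2 : ContDiffAt ℝ (⊤ : ℕ∞)
        (fun a : EuclideanSpace ℝ (Fin n) => ((a, (0 : EuclideanSpace ℝ (Fin m))) :
          EuclideanSpace ℝ (Fin n) × EuclideanSpace ℝ (Fin m))) a :=
      (contDiff_id.prodMk contDiff_const).contDiffAt
    have h3 : ContDiffAt ℝ (⊤ : ℕ∞) (fun a : EuclideanSpace ℝ (Fin n) => Ψ.symm (a, 0)) a :=
      h1.comp a h2
    exact ((contDiff_snd.contDiffAt.comp a h3)).contDiffWithinAt
  -- uniqueness of the critical point
  have huniq : ∀ a ∈ A, ζ a ∈ Z' ∧ ∀ z ∈ Z',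
      (ContinuousLinearMap.adjoint (fderiv ℝ φ z) (a - φ z) = 0 ↔ z = ζ a) := by
    intro a ha
    obtain ⟨hpair, hζZ', hf0, hζsrc⟩ := hkey a ha
    refine ⟨hζZ', fun z hzZ' => ?_⟩
    have hfz : ContinuousLinearMap.adjoint (fderiv ℝ φ z) (a - φ z) = f (a, z) := rfl
    rw [hfz]
    constructor
    · intro h0
      have hzsrc : (a, z) ∈ Ψ.source := (hprod ⟨ha.1, hzZ'⟩).1
      have hΨeq : Ψ (a, z) = Ψ (a, ζ a) := by
        rw [hΨcoe]
        show ((a, z).1, f (a, z)) = ((a, ζ a).1, f (a, ζ a))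
        rw [h0, hf0]
      have := Ψ.injOn hzsrc hζsrc hΨeq
      exact congrArg Prod.snd this
    · rintro rfl
      exact hf0
  -- derivative of ζ at a₀
  have hζdiffA : DifferentiableAt ℝ ζ a₀ :=
    ((hζCD.contDiffAt (hAopen.mem_nhds hA₀)).differentiableAt hone)
  set ζ' := fderiv ℝ ζ a₀ with hζ'def
  have hg0 : (fun a => f (a, ζ a)) =ᶠ[𝓝 a₀]
      (fun _ => (0 : EuclideanSpace ℝ (Fin m))) := by
    filter_upwards [hAopen.mem_nhds hA₀] with a ha using (hkey a ha).2.2.1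
  have hgd : HasFDerivAt (fun a => f (a, ζ a))
      (f'.comp ((ContinuousLinearMap.id ℝ (EuclideanSpace ℝ (Fin n))).prod ζ')) a₀ := by
    have hpairD : HasFDerivAt
        (fun a => ((a, ζ a) : EuclideanSpace ℝ (Fin n) × EuclideanSpace ℝ (Fin m)))
        ((ContinuousLinearMap.id ℝ (EuclideanSpace ℝ (Fin n))).prod ζ') a₀ :=
      (hasFDerivAt_id a₀).prodMk hζdiffA.hasFDerivAt
    have hfd' : HasFDerivAt f f' (a₀, ζ a₀) := by rw [hζa₀]; exact hfd
    exact hfd'.comp a₀ hpairD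
  have hcomp0 : f'.comp ((ContinuousLinearMap.id ℝ (EuclideanSpace ℝ (Fin n))).prod ζ') = 0 := by
    have h1 := hgd.fderiv
    rw [← h1, hg0.fderiv_eq]
    exact fderiv_const_apply 0
  have hζ'T : ζ' = Hinv.comp T := by
    refine ContinuousLinearMap.ext fun v => ?_
    have h1 := ContinuousLinearMap.ext_iff.1 hcomp0 v
    rw [hf'def] at h1
    simp only [ContinuousLinearMap.comp_apply, ContinuousLinearMap.sub_apply,
      ContinuousLinearMap.prod_apply, ContinuousLinearMap.coe_id', id_eq,
      ContinuousLinearMap.coe_fst', ContinuousLinearMap.coe_snd',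
      ContinuousLinearMap.zero_apply] at h1 ⊢
    have h2 : H (ζ' v) = T v := by
      have := sub_eq_zero.1 h1
      exact this.symm
    calc ζ' v = Hinv (H (ζ' v)) := (hHinvH _).symm
      _ = Hinv (T v) := by rw [h2]
  -- derivative of the solution map
  have hχdiff : DifferentiableAt ℝ χ z₀ := (hχ.contDiffAt hZnhds).differentiableAt hone
  have hyd : HasFDerivAt (fun a => χ (ζ a)) (((fderiv ℝ χ z₀).comp Hinv).comp T) a₀ := by
    have hχd' : HasFDerivAt χ (fderiv ℝ χ z₀) (ζ a₀) := by
      rw [hζa₀]; exact hχdiff.hasFDerivAt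
    have h := hχd'.comp a₀ hζdiffA.hasFDerivAt
    rw [← hζ'def, hζ'T] at h
    have heq : (fderiv ℝ χ z₀).comp (Hinv.comp T) = ((fderiv ℝ χ z₀).comp Hinv).comp T :=
      (ContinuousLinearMap.comp_assoc _ _ _).symm
    rwa [heq] at h
  refine ⟨A, Z', ζ, hAopen, hA₀, hZ'open, hZ'Z, hZ'mem, hζCD, hζa₀, huniq, hyd.fderiv, ?_⟩
  exact rice_aux (fun a => χ (ζ a)) _ a₀ hyd A hAopen hA₀
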